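/- Let G = A₅ be the alternating group on five letters and H a subgroup of order 5. Then there is exactly one proper subgroup of A₅ strictly containing H, namely its normalizer, which has order 10. In particular A₅ does not satisfy the 2-valency condition. -/

import Mathlib

/-- The intersection graph of a group `G`: vertices are the proper non-trivial
subgroups, with an edge between two distinct subgroups whose intersection is
non-trivial. -/
def interGraph (G : Type*) [Group G] :
    SimpleGraph {H : Subgroup G // H ≠ ⊥ ∧ H ≠ ⊤} where
  Adj A B := A ≠ B ∧ A.1 ⊓ B.1 ≠ ⊥
  symm := ⟨by
    rintro A B ⟨h1, h2⟩
    exact ⟨h1.symm, by rwa [inf_comm]⟩⟩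
  loopless := ⟨by rintro A ⟨h1, _⟩; exact h1 rfl⟩

/-- `S` is a separating set of `Γ`: after removing the vertices of `S`, some
two remaining vertices are not joined by a path. -/
def IsSepSet {V : Type*} (Γ : SimpleGraph V) (S : Set V) : Prop :=
  ∃ a b : ↥(Sᶜ), ¬ (Γ.induce Sᶜ).Reachable a b

/-- A graph is `k`-connected if it has more than `k` vertices and no
separating set of cardinality `< k`. -/
def KConnected {V : Type*} (Γ : SimpleGraph V) (k : ℕ) : Prop :=
  k < Nat.card V ∧ ∀ S : Set V, IsSepSet Γ S → k ≤ Nat.card S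

/-- A minimal subgroup: a minimal element of the poset of non-trivial subgroups. -/
def IsMinimalSubgroup {G : Type*} [Group G] (A : Subgroup G) : Prop :=
  A ≠ ⊥ ∧ ∀ K : Subgroup G, K ≠ ⊥ → K ≤ A → K = A

/-- There exist (at least) `k` pairwise internally independent paths from `u` to `v`. -/
def HasIndepPaths {V : Type*} (Γ : SimpleGraph V) (u v : V) (k : ℕ) : Prop :=
  ∃ p : Fin k → Γ.Walk u v, (∀ i, (p i).IsPath) ∧
    ∀ i j, i ≠ j → ∀ x ∈ (p i).support, x ∈ (p j).support → x = u ∨ x = v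

/-- A finite group is supersolvable if it has a normal series (all terms normal
in the whole group) whose successive factors are of prime order. -/
def IsSupersolvable (G : Type*) [Group G] : Prop :=
  ∃ (n : ℕ) (s : Fin (n + 1) → Subgroup G), s 0 = ⊥ ∧ s (Fin.last n) = ⊤ ∧
    (∀ i, (s i).Normal) ∧
    ∀ i : Fin n, s i.castSucc ≤ s i.succ ∧ ((s i.castSucc).relIndex (s i.succ)).Prime

local notation "G5" => alternatingGroup (Fin 5)

private lemma cardA5 : Nat.card G5 = 60 := by
  have h := two_mul_card_alternatingGroup (α := Fin 5)
  rw [Fintype.card_perm, Fintype.card_fin] at h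
  rw [Nat.card_eq_fintype_card]
  have h5 : Nat.factorial 5 = 120 := by norm_num [Nat.factorial]
  omega

private lemma fact60 : (Nat.factorization 60) 5 = 1 := by
  have h : (60 : ℕ) = 5 * 12 := by norm_num
  rw [h, Nat.factorization_mul (by norm_num) (by norm_num)]
  simp [Nat.Prime.factorization_self (by norm_num : Nat.Prime 5),
    Nat.factorization_eq_zero_of_not_dvd (by norm_num : ¬ (5:ℕ) ∣ 12)]

private lemma fact10 : (Nat.factorization 10) 5 = 1 := by
  have h : (10 : ℕ) = 5 * 2 := by norm_num
  rw [h, Nat.factorization_mul (by norm_num) (by norm_num)]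
  simp [Nat.Prime.factorization_self (by norm_num : Nat.Prime 5),
    Nat.factorization_eq_zero_of_not_dvd (by norm_num : ¬ (5:ℕ) ∣ 2)]

theorem stmt14 (H : Subgroup (alternatingGroup (Fin 5))) (hH : Nat.card H = 5) :
    H < Subgroup.normalizer (H : Set (alternatingGroup (Fin 5))) ∧ Subgroup.normalizer (H : Set (alternatingGroup (Fin 5))) ≠ ⊤ ∧ Nat.card (Subgroup.normalizer (H : Set (alternatingGroup (Fin 5)))) = 10 ∧
    (∀ K : Subgroup (alternatingGroup (Fin 5)), H < K → K ≠ ⊤ → K = Subgroup.normalizer (H : Set (alternatingGroup (Fin 5)))) ∧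
    ¬ (∀ A : Subgroup (alternatingGroup (Fin 5)), IsMinimalSubgroup A →
        2 ≤ Nat.card {K : Subgroup (alternatingGroup (Fin 5)) // A < K ∧ K ≠ ⊤}) := by
  haveI : Fact (Nat.Prime 5) := ⟨by norm_num⟩
  have hG : Nat.card G5 = 60 := cardA5
  -- H is not normal
  have hHnorm : ¬ H.Normal := by
    intro hn
    rcases IsSimpleGroup.eq_bot_or_eq_top_of_normal H hn with h | h
    · rw [h, Subgroup.card_bot] at hH; omega
    · rw [h, Subgroup.card_top, hG] at hH; omega
  have hNne : (Subgroup.normalizer (H : Set G5)) ≠ ⊤ := fun h => hHnorm (Subgroup.normalizer_eq_top_iff.mp h)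
  -- Sylow
  let P : Sylow 5 G5 := Sylow.ofCard H (by rw [hH, hG, fact60, pow_one])
  have hPH : (P : Subgroup G5) = H := Sylow.coe_ofCard H _
  have hPidx : (P : Subgroup G5).index = 12 := by
    have h := Subgroup.index_mul_card (P : Subgroup G5)
    have hc : Nat.card (P : Subgroup G5) = 5 := by rw [hPH, hH]
    rw [hc, hG] at h; omega
  have hn5 : Nat.card (Sylow 5 G5) = 6 := by
    have h1 := card_sylow_modEq_one 5 G5
    have h2 := P.card_dvd_index
    rw [hPidx] at h2
    have h3 : Nat.card (Sylow 5 G5) ≠ 1 := by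
      intro h
      apply hNne
      rw [← Subgroup.index_eq_one, ← hPH]; exact (P.card_eq_index_normalizer).symm.trans h
    have h4 : Nat.card (Sylow 5 G5) ≤ 12 := Nat.le_of_dvd (by norm_num) h2
    unfold Nat.ModEq at h1
    interval_cases h : (Nat.card (Sylow 5 G5)) <;> omega
  have hNcard : Nat.card (Subgroup.normalizer (H : Set G5)) = 10 := by
    have h := Subgroup.index_mul_card (Subgroup.normalizer (H : Set G5))
    have hi : (Subgroup.normalizer (H : Set G5)).index = 6 := by
      rw [← hn5, ← hPH]; exact (P.card_eq_index_normalizer).symm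
    rw [hG, hi] at h; omega
  have hlt : H < (Subgroup.normalizer (H : Set G5)) := lt_of_le_of_ne Subgroup.le_normalizer
    (fun h => by rw [← h, hH] at hNcard; omega)
  -- uniqueness
  have huniq : ∀ K : Subgroup G5, H < K → K ≠ ⊤ → K = (Subgroup.normalizer (H : Set G5)) := by
    intro K hK hKt
    -- the order of K is 10
    have h5 : 5 ∣ Nat.card K := by
      have := Subgroup.card_dvd_of_le hK.le; rwa [hH] at this
    have hd : Nat.card K ∣ 60 := by
      have := Subgroup.card_subgroup_dvd_card K; rwa [hG] at this
    have hne5 : Nat.card K ≠ 5 := by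
      intro h
      exact hK.ne (Subgroup.eq_of_le_of_card_ge hK.le (by rw [h, hH]))
    have hcore : K.normalCore = ⊥ := by
      rcases IsSimpleGroup.eq_bot_or_eq_top_of_normal K.normalCore
        (Subgroup.normalCore_normal K) with h | h
      · exact h
      · exact absurd (top_le_iff.mp (h ▸ K.normalCore_le)) hKt
    have hinj : Function.Injective (MulAction.toPermHom G5 (G5 ⧸ K)) := by
      rw [← MonoidHom.ker_eq_bot_iff, ← Subgroup.normalCore_eq_ker, hcore]
    have hdvd : 60 ∣ (K.index).factorial := by
      classical
      have h1 := Subgroup.card_dvd_of_injective _ hinj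
      rw [hG] at h1
      haveI := Fintype.ofFinite (G5 ⧸ K)
      rwa [Nat.card_eq_fintype_card, Fintype.card_perm, ← Nat.card_eq_fintype_card,
        show Nat.card (G5 ⧸ K) = K.index from rfl] at h1
    have hmul := Subgroup.index_mul_card K
    rw [hG] at hmul
    have h5i : 5 ≤ K.index :=
      (Nat.Prime.dvd_factorial (by norm_num : Nat.Prime 5)).mp
        (dvd_trans (by norm_num) hdvd)
    obtain ⟨m, hm⟩ := h5
    have him : K.index * m = 12 := by
      have h' : K.index * m * 5 = 60 := by
        rw [mul_assoc, mul_comm m 5, ← hm, hmul]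
      omega
    have hi12 : K.index ∣ 12 := ⟨m, him.symm⟩
    have hile : K.index ≤ 12 := Nat.le_of_dvd (by norm_num) hi12
    have hcK : Nat.card K = 10 := by
      interval_cases h : K.index <;> omega
    -- H is normal in K, hence K ≤ normalizer H
    have hHK5 : Nat.card (H.subgroupOf K) = 5 := by
      rw [Nat.card_congr (Subgroup.subgroupOfEquivOfLe hK.le).toEquiv, hH]
    let Q : Sylow 5 K := Sylow.ofCard (H.subgroupOf K) (by rw [hHK5, hcK, fact10, pow_one])
    have hQH : (Q : Subgroup K) = H.subgroupOf K := Sylow.coe_ofCard _ _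
    have hQidx : (Q : Subgroup K).index = 2 := by
      have h := Subgroup.index_mul_card (Q : Subgroup K)
      have hc : Nat.card (Q : Subgroup K) = 5 := by rw [hQH, hHK5]
      rw [hc, hcK] at h; omega
    have hns : Nat.card (Sylow 5 K) = 1 := by
      have h1 := card_sylow_modEq_one 5 K
      have h2 := Q.card_dvd_index
      rw [hQidx] at h2
      have h4 : Nat.card (Sylow 5 K) ≤ 2 := Nat.le_of_dvd (by norm_num) h2
      unfold Nat.ModEq at h1
      interval_cases h : (Nat.card (Sylow 5 K)) <;> omega
    haveI hnorm : (H.subgroupOf K).Normal := by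
      rw [← hQH]
      rw [← Subgroup.normalizer_eq_top_iff, ← Subgroup.index_eq_one]
      exact (Q.card_eq_index_normalizer).symm.trans hns
    have hle : K ≤ (Subgroup.normalizer (H : Set G5)) := Subgroup.le_normalizer_of_normal_subgroupOf hK.le
    exact Subgroup.eq_of_le_of_card_ge hle (by rw [hNcard, hcK])
  refine ⟨hlt, hNne, hNcard, huniq, ?_⟩
  intro hcon
  have hmin : IsMinimalSubgroup H := by
    constructor
    · intro h
      rw [h, Subgroup.card_bot] at hH; omega
    · intro K hKb hKH
      have h1 : Nat.card K ∣ 5 := by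
        have := Subgroup.card_dvd_of_le hKH; rwa [hH] at this
      have h2 : Nat.card K ≠ 1 := fun h => hKb (K.eq_bot_iff_card.mpr h)
      have h3 : Nat.card K = 5 := (Nat.Prime.eq_one_or_self_of_dvd (by norm_num) _ h1).resolve_left h2
      exact Subgroup.eq_of_le_of_card_ge hKH (by rw [hH, h3])
  have h2 := hcon H hmin
  have h1 : Nat.card {K : Subgroup G5 // H < K ∧ K ≠ ⊤} = 1 := by
    rw [Nat.card_eq_one_iff_unique]
    refine ⟨⟨fun a b => ?_⟩, ⟨⟨(Subgroup.normalizer (H : Set G5)), hlt, hNne⟩⟩⟩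
    ext1
    rw [huniq a.1 a.2.1 a.2.2, huniq b.1 b.2.1 b.2.2]
  omega
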